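/- Substituting z = 0 into F gives the factorization F(x,y,0) = x³·y⁴·(A·x + B·y) in ℂ[x,y], where A = −(72389196288·αβ + 466877917440·α + 298344909312·β + 1925078503680) and B = (24·14182182144·αβ + 144·15251365120·α + 24·58496365824·β + 48·188641373952)·δ, and both A ≠ 0 and B ≠ 0. Consequently the line z = 0 meets the octic curve {F = 0} with multiplicity 4 at p = [1:0:0], with multiplicity 3 at p1 = [0:1:0], and with multiplicity 1 at the single further point [−B : A : 0], whose coordinates lie in the field ℚ(α,β,δ). -/
import Mathlib


noncomputable section

open MvPolynomial

/-- The polynomial ring `ℂ[x,y,z]`. -/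
abbrev R3 : Type := MvPolynomial (Fin 3) ℂ

/-- `α = √17`. -/
def α : ℂ := Real.sqrt 17
/-- `β = √(21 + 5√17)`. -/
def β : ℂ := Real.sqrt (21 + 5 * Real.sqrt 17)
/-- `δ = √(5 + √17)`. -/
def δ : ℂ := Real.sqrt (5 + Real.sqrt 17)

def x : R3 := X 0
def y : R3 := X 1
def z : R3 := X 2

def A1 : R3 :=
  14408408592*x^4*y^2*z + 50076004923*x^4*z^3 + 14182182144*x^3*y^4
  + 219953469600*x^3*y^2*z^2 - 363210576777*x^3*z^4 - 1093337332608*x^2*y^2*z^3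
  + 831133690121*x^2*z^5 + 858975454416*x*y^2*z^4 - 772939669603*x*z^6
  + 254940551336*z^7

def A2 : R3 :=
  -72389196288*x^4*y^4 - 3335393797632*x^4*y^2*z^2 - 1065820046526*x^4*z^4
  - 8342111361024*x^3*y^4*z + 3945428471808*x^3*y^2*z^3 + 10184161263912*x^3*z^5
  + 20168534212608*x^2*y^4*z^2 + 53110876008192*x^2*y^2*z^4 - 32270723397636*x^2*z^6
  - 100932292129536*x*y^2*z^5 + 38252243189640*x*z^7 + 47211381447168*y^2*z^6
  - 15099861009390*z^8

def A3 : R3 :=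
  15490159728*x^4*y^2*z + 53840161671*x^4*z^3 + 15251365120*x^3*y^4
  + 236488232416*x^3*y^2*z^2 - 390512591333*x^3*z^4 - 1175521621376*x^2*y^2*z^3
  + 893608694925*x^2*z^5 + 923543229232*x*y^2*z^4 - 831040262535*x*z^6
  + 274103997272*z^7

def A4 : R3 :=
  59398585488*x^4*y^2*z + 206468708787*x^4*z^3 + 58496365824*x^3*y^4
  + 906899335584*x^3*y^2*z^2 - 1497555836337*x^3*z^4 - 4507944789888*x^2*y^2*z^3
  + 3426852351793*x^2*z^5 + 3541646868816*x*y^2*z^4 - 3186912029723*x*z^6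
  + 1051146805480*z^7

def A5 : R3 :=
  -466877917440*x^4*y^4 - 21516582641184*x^4*y^2*z^2 - 6875617032333*x^4*z^4
  - 53815549731840*x^3*y^4*z + 25451977456512*x^3*y^2*z^3 + 65698123816692*x^3*z^5
  + 130107481479168*x^2*y^4*z^2 + 342618718898784*x^2*y^2*z^4 - 208178748305934*x^2*z^6
  - 651115201689280*x*y^2*z^5 + 246765593291124*x*z^7 + 304561087975168*y^2*z^6
  - 97409351769549*z^8

def A6 : R3 :=
  -298344909312*x^4*y^4 - 13752106145280*x^4*y^2*z^2 - 4394491299054*x^4*z^4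
  - 34395989170176*x^3*y^4*z + 16267404201984*x^3*y^2*z^3 + 41990375439720*x^3*z^5
  + 83157067186176*x^2*y^4*z^2 + 218981688444672*x^2*y^2*z^4 - 133055599121316*x^2*z^6
  - 416154499902208*x*y^2*z^5 + 157718037119688*x*z^7 + 194657513400832*y^2*z^6
  - 62258322139038*z^8

def A7 : R3 :=
  191605550544*x^4*y^2*z + 665965983645*x^4*z^3 + 188641373952*x^3*y^4
  + 2925195141792*x^3*y^2*z^2 - 4830373865031*x^3*z^4 - 14540399432832*x^2*y^2*z^3
  + 11053328983807*x^2*z^5 + 11423598740496*x*y^2*z^4 - 10279400307101*x*z^6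
  + 3390479204680*z^7

def A8 : R3 :=
  -1925078503680*x^4*y^4 - 88715185482528*x^4*y^2*z^2 - 28348893570645*x^4*z^4
  - 221886790124544*x^3*y^4*z + 104941198124928*x^3*y^2*z^3 + 270880301999124*x^3*z^5
  + 536446841591808*x^2*y^4*z^2 + 1412653204386144*x^2*y^2*z^4 - 858342969385662*x^2*z^6
  - 2684616751584448*x*y^2*z^5 + 1017440607056532*x*z^7 + 1255737534555904*y^2*z^6
  - 401629046099349*z^8

/-- Werner's homogeneous octic `F`. -/
def F : R3 :=
  C (24*α*β*δ) * y * A1 + C (α*β) * A2 + C (144*α*δ) * y * A3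
  + C (24*β*δ) * y * A4 + C α * A5 + C β * A6 + C (48*δ) * y * A7 + A8

/-- The conic `Q`. -/
def Qpoly : R3 :=
  C (9*α*β+90*α+81*β+234) * x^2 + C (176*α*β+1568*α+1200*β+5920) * y^2
  + C (57*α*β+258*α+129*β+1170) * z^2 - C (48*α*β*δ+168*α*δ+48*β*δ+936*δ) * x * y
  - C (66*α*β+348*α+210*β+1404) * x * z + C (48*α*β*δ+168*α*δ+48*β*δ+936*δ) * y * z

/-- Coordinate representative of `p = [1:0:0]`. -/
def ptP : Fin 3 → ℂ := ![1, 0, 0]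
/-- Coordinate representative of `p1 = [0:1:0]`. -/
def ptP1 : Fin 3 → ℂ := ![0, 1, 0]
/-- Coordinate representative of `p2 = [10+4α+4β : 3δ : 6]`. -/
def ptP2 : Fin 3 → ℂ := ![10+4*α+4*β, 3*δ, 6]
/-- Coordinate representative of `p3 = [1:0:1]`. -/
def ptP3 : Fin 3 → ℂ := ![1, 0, 1]
/-- Coordinate representative of `p4 = [16+4α+4β : 3δ+6 : 12]`. -/
def ptP4 : Fin 3 → ℂ := ![16+4*α+4*β, 3*δ+6, 12]
/-- Coordinate representative of `p5 = [16+4α+4β : 3δ−6 : 12]`. -/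
def ptP5 : Fin 3 → ℂ := ![16+4*α+4*β, 3*δ-6, 12]

/-- `A = −(72389196288αβ + 466877917440α + 298344909312β + 1925078503680)`. -/
def Acoef : ℂ :=
  -(72389196288*(α*β) + 466877917440*α + 298344909312*β + 1925078503680)

/-- `B = (24·14182182144·αβ + 144·15251365120·α + 24·58496365824·β + 48·188641373952)·δ`. -/
def Bcoef : ℂ :=
  (24*14182182144*(α*β) + 144*15251365120*α + 24*58496365824*β
    + 48*188641373952) * δ

set_option maxHeartbeats 4000000 in
/-- substituting `z = 0` into `F` gives `F(x,y,0) = x³·y⁴·(A·x + B·y)`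
with `A ≠ 0` and `B ≠ 0`; hence the line `z = 0` meets the octic `{F = 0}` with
multiplicity 4 at `p = [1:0:0]`, multiplicity 3 at `p1 = [0:1:0]`, and multiplicity 1
at the single further point `[−B : A : 0]`, whose coordinates lie in `ℚ(α,β,δ)`. -/
theorem werner_octic_restricted_to_line_z_eq_zero :
    (aeval ![x, y, (0 : R3)]) F = x^3 * y^4 * (C Acoef * x + C Bcoef * y) ∧
    Acoef ≠ 0 ∧ Bcoef ≠ 0 ∧
    eval ![-Bcoef, Acoef, 0] F = 0 ∧
    (-Bcoef) ∈ IntermediateField.adjoin ℚ ({α, β, δ} : Set ℂ) ∧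
    Acoef ∈ IntermediateField.adjoin ℚ ({α, β, δ} : Set ℂ) := by
  have h1 : (aeval ![x, y, (0 : R3)]) F = x^3 * y^4 * (C Acoef * x + C Bcoef * y) := by
    simp only [x, y, z, F, A1, A2, A3, A4, A5, A6, A7, A8, Acoef, Bcoef, map_add, map_sub, map_mul,
      map_pow, map_neg, map_ofNat, aeval_X, aeval_C, algebraMap_eq,
      Matrix.cons_val_zero, Matrix.cons_val_one, Matrix.head_cons,
      Matrix.cons_val_two, Matrix.tail_cons, C_add, C_mul, C_neg]
    ring
  refine ⟨h1, ?_, ?_, ?_, ?_, ?_⟩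
  · have h : Acoef = Complex.ofReal (-(72389196288*(Real.sqrt 17*Real.sqrt (21+5*Real.sqrt 17))
        + 466877917440*Real.sqrt 17 + 298344909312*Real.sqrt (21+5*Real.sqrt 17)
        + 1925078503680)) := by
      simp only [Acoef, α, β]; push_cast; ring
    rw [h, ne_eq, Complex.ofReal_eq_zero]
    have hp : (0:ℝ) < 72389196288*(Real.sqrt 17*Real.sqrt (21+5*Real.sqrt 17))
        + 466877917440*Real.sqrt 17 + 298344909312*Real.sqrt (21+5*Real.sqrt 17)
        + 1925078503680 := by positivity
    intro hc; rw [neg_eq_zero] at hc; linarith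
  · have h : Bcoef = Complex.ofReal ((24*14182182144*(Real.sqrt 17*Real.sqrt (21+5*Real.sqrt 17))
        + 144*15251365120*Real.sqrt 17 + 24*58496365824*Real.sqrt (21+5*Real.sqrt 17)
        + 48*188641373952) * Real.sqrt (5+Real.sqrt 17)) := by
      simp only [Bcoef, α, β, δ]; push_cast; ring
    rw [h, ne_eq, Complex.ofReal_eq_zero]
    have hp : (0:ℝ) < (24*14182182144*(Real.sqrt 17*Real.sqrt (21+5*Real.sqrt 17))
        + 144*15251365120*Real.sqrt 17 + 24*58496365824*Real.sqrt (21+5*Real.sqrt 17)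
        + 48*188641373952) * Real.sqrt (5+Real.sqrt 17) := by positivity
    intro hc; linarith
  · have h2 := congrArg (aeval (![-Bcoef, Acoef, 0] : Fin 3 → ℂ)) h1
    rw [comp_aeval_apply] at h2
    have hv : (fun i => aeval (![-Bcoef, Acoef, 0] : Fin 3 → ℂ) (![x, y, (0:R3)] i))
        = ![-Bcoef, Acoef, 0] := by
      funext i; fin_cases i <;> simp [x, y]
    rw [hv] at h2
    have he : eval (![-Bcoef, Acoef, 0] : Fin 3 → ℂ) F
        = aeval (![-Bcoef, Acoef, 0] : Fin 3 → ℂ) F :=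
      (RingHom.congr_fun (coe_aeval_eq_eval (![-Bcoef, Acoef, 0] : Fin 3 → ℂ)) F).symm
    rw [he, h2]
    simp only [x, y, map_add, map_mul, map_pow, aeval_X, aeval_C,
      Matrix.cons_val_zero, Matrix.cons_val_one, Matrix.head_cons, algebraMap_eq]
    have : aeval (![-Bcoef, Acoef, 0] : Fin 3 → ℂ) (C Acoef) = Acoef := by simp
    have : aeval (![-Bcoef, Acoef, 0] : Fin 3 → ℂ) (C Bcoef) = Bcoef := by simp
    simp only [aeval_C, Algebra.algebraMap_self, RingHom.id_apply]
    ring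
  · have hα : α ∈ IntermediateField.adjoin ℚ ({α, β, δ} : Set ℂ) :=
      IntermediateField.subset_adjoin _ _ (by simp)
    have hβ : β ∈ IntermediateField.adjoin ℚ ({α, β, δ} : Set ℂ) :=
      IntermediateField.subset_adjoin _ _ (by simp)
    have hδ : δ ∈ IntermediateField.adjoin ℚ ({α, β, δ} : Set ℂ) :=
      IntermediateField.subset_adjoin _ _ (by simp)
    rw [Bcoef]
    refine neg_mem (mul_mem (add_mem (add_mem (add_mem
      (mul_mem (mul_mem (ofNat_mem _ _) (ofNat_mem _ _)) (mul_mem hα hβ))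
      (mul_mem (mul_mem (ofNat_mem _ _) (ofNat_mem _ _)) hα))
      (mul_mem (mul_mem (ofNat_mem _ _) (ofNat_mem _ _)) hβ))
      (mul_mem (ofNat_mem _ _) (ofNat_mem _ _))) hδ)
  · have hα : α ∈ IntermediateField.adjoin ℚ ({α, β, δ} : Set ℂ) :=
      IntermediateField.subset_adjoin _ _ (by simp)
    have hβ : β ∈ IntermediateField.adjoin ℚ ({α, β, δ} : Set ℂ) :=
      IntermediateField.subset_adjoin _ _ (by simp)
    rw [Acoef]
    refine neg_mem (add_mem (add_mem (add_mem
      (mul_mem (ofNat_mem _ _) (mul_mem hα hβ))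
      (mul_mem (ofNat_mem _ _) hα))
      (mul_mem (ofNat_mem _ _) hβ))
      (ofNat_mem _ _))
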